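/- Let L_B(X) = Σ_{i=1}^k B_i ⊗ X_i be a linear pencil on K ⊗ E with each B_i positive semi-definite. If each X_i is sectorial with numerical range in S_α for a common α ∈ [0, π/2), then the numerical range of L_B(X), restricted to the subspace N⊥(Σ B_i) ⊗ E (the closure of the orthogonal complement of the kernel of Σ_{i=1}^k B_i, tensored with E), is contained in S_α. -/

import Mathlib

open scoped InnerProductSpace ComplexOrder
open Matrix

/-- The operator `B ⊗ X` acting on `ℂ^m ⊗ E ≅ (PiLp 2 fun _ : Fin m => E)`. -/
noncomputable def kronCLM {m : ℕ} {E : Type*} [NormedAddCommGroup E] [InnerProductSpace ℂ E]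
    [CompleteSpace E] (B : Matrix (Fin m) (Fin m) ℂ) (X : E →L[ℂ] E) :
    (PiLp 2 fun _ : Fin m => E) →L[ℂ] (PiLp 2 fun _ : Fin m => E) :=
  ((PiLp.continuousLinearEquiv 2 ℂ (fun _ : Fin m => E)).symm.toContinuousLinearMap).comp
    ((ContinuousLinearMap.pi
        (fun j => ∑ l, B j l • X.comp (ContinuousLinearMap.proj l))).comp
      (PiLp.continuousLinearEquiv 2 ℂ (fun _ : Fin m => E)).toContinuousLinearMap)

section SqrtCompat

open scoped MatrixOrder

noncomputable def Matrix.PosSemidef.sqrt {n : Type*} [Fintype n] [DecidableEq n]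
    {A : Matrix n n ℂ} (_hA : A.PosSemidef) : Matrix n n ℂ := CFC.sqrt A

lemma Matrix.PosSemidef.sqrt_mul_self {n : Type*} [Fintype n] [DecidableEq n]
    {A : Matrix n n ℂ} (hA : A.PosSemidef) : hA.sqrt * hA.sqrt = A :=
  CFC.sqrt_mul_sqrt_self A hA.nonneg

lemma Matrix.PosSemidef.posSemidef_sqrt {n : Type*} [Fintype n] [DecidableEq n]
    {A : Matrix n n ℂ} (hA : A.PosSemidef) : hA.sqrt.PosSemidef :=
  (CFC.sqrt_nonneg A).posSemidef

end SqrtCompat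

section Aux

variable {m : ℕ} {E : Type*} [NormedAddCommGroup E] [InnerProductSpace ℂ E]

lemma kronCLM_apply [CompleteSpace E] (B : Matrix (Fin m) (Fin m) ℂ) (X : E →L[ℂ] E)
    (v : PiLp 2 fun _ : Fin m => E) (j : Fin m) :
    (kronCLM B X) v j = ∑ l, B j l • X (v l) := by
  simp [kronCLM, ContinuousLinearMap.sum_apply]

lemma inner_kronCLM [CompleteSpace E] (B : Matrix (Fin m) (Fin m) ℂ) (X : E →L[ℂ] E)
    (v : PiLp 2 fun _ : Fin m => E) :
    ⟪(kronCLM B X) v, v⟫_ℂ = ∑ j, ∑ l, (starRingEnd ℂ) (B j l) * ⟪X (v l), v j⟫_ℂ := by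
  rw [PiLp.inner_apply]
  refine Finset.sum_congr rfl fun j _ => ?_
  rw [kronCLM_apply, sum_inner]
  simp [inner_smul_left]

omit [InnerProductSpace ℂ E] in
lemma sqrt_sum_eq_zero_imp (B : Matrix (Fin m) (Fin m) ℂ) (hB : B.PosSemidef)
    [Module ℂ E] (v : Fin m → E)
    (h : ∀ p, ∑ l, hB.sqrt p l • v l = 0) : ∀ j, ∑ l, B j l • v l = 0 := by
  intro j
  have hBS : ∀ l, B j l = ∑ p, hB.sqrt j p * hB.sqrt p l := by
    intro l; conv_lhs => rw [← hB.sqrt_mul_self, Matrix.mul_apply]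
  calc ∑ l, B j l • v l = ∑ l, ∑ p, (hB.sqrt j p * hB.sqrt p l) • v l := by
        refine Finset.sum_congr rfl fun l _ => ?_
        rw [hBS, Finset.sum_smul]
    _ = ∑ p, hB.sqrt j p • ∑ l, hB.sqrt p l • v l := by
        rw [Finset.sum_comm]
        refine Finset.sum_congr rfl fun p _ => ?_
        rw [Finset.smul_sum]
        exact Finset.sum_congr rfl fun l _ => mul_smul _ _ _
    _ = 0 := Finset.sum_eq_zero fun p _ => by rw [h p, smul_zero]

lemma double_sum_sqrt (B : Matrix (Fin m) (Fin m) ℂ) (hB : B.PosSemidef) (X : E →L[ℂ] E)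
    (v : Fin m → E) :
    ∑ j, ∑ l, (starRingEnd ℂ) (B j l) * ⟪X (v l), v j⟫_ℂ =
      ∑ p, ⟪X (∑ l, hB.sqrt p l • v l), ∑ l, hB.sqrt p l • v l⟫_ℂ := by
  set S := hB.sqrt with hS
  have hherm : Sᴴ = S := hB.posSemidef_sqrt.1
  have hSherm : ∀ p l : Fin m, (starRingEnd ℂ) (S p l) = S l p := by
    intro p l
    calc (starRingEnd ℂ) (S p l) = Sᴴ l p := rfl
    _ = S l p := by rw [hherm]
  have hBconj : ∀ j l : Fin m, (starRingEnd ℂ) (B j l) = ∑ p, (starRingEnd ℂ) (S p l) * S p j := by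
    intro j l
    have : B j l = ∑ p, S j p * S p l := by rw [← hB.sqrt_mul_self, Matrix.mul_apply]
    rw [this, map_sum (starRingEnd ℂ)]
    refine Finset.sum_congr rfl fun p _ => ?_
    rw [RingHom.map_mul, hSherm, hSherm]
    ring
  have hRHS : ∀ p : Fin m, ⟪X (∑ l, S p l • v l), ∑ l, S p l • v l⟫_ℂ =
      ∑ l, ∑ j, (starRingEnd ℂ) (S p l) * S p j * ⟪X (v l), v j⟫_ℂ := by
    intro p
    rw [map_sum, sum_inner]
    refine Finset.sum_congr rfl fun l _ => ?_
    rw [inner_sum]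
    refine Finset.sum_congr rfl fun j _ => ?_
    rw [X.map_smul, inner_smul_left, inner_smul_right]
    ring
  have hLHS : ∀ j l : Fin m, (starRingEnd ℂ) (B j l) * ⟪X (v l), v j⟫_ℂ =
      ∑ p, (starRingEnd ℂ) (S p l) * S p j * ⟪X (v l), v j⟫_ℂ := by
    intro j l
    rw [hBconj, Finset.sum_mul]
  simp only [hRHS, hLHS]
  calc ∑ j, ∑ l, ∑ p, ((starRingEnd ℂ) (S p l) * S p j * ⟪X (v l), v j⟫_ℂ)
      = ∑ j, ∑ p, ∑ l, ((starRingEnd ℂ) (S p l) * S p j * ⟪X (v l), v j⟫_ℂ) :=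
        Finset.sum_congr rfl fun j _ => by rw [Finset.sum_comm]
    _ = ∑ p, ∑ j, ∑ l, ((starRingEnd ℂ) (S p l) * S p j * ⟪X (v l), v j⟫_ℂ) := by
        rw [Finset.sum_comm]
    _ = ∑ p, ∑ l, ∑ j, ((starRingEnd ℂ) (S p l) * S p j * ⟪X (v l), v j⟫_ℂ) :=
        Finset.sum_congr rfl fun p _ => by rw [Finset.sum_comm]

lemma sector_point (X : E →L[ℂ] E) (α : ℝ)
    (hX : ∀ x : E, ‖x‖ = 1 →
      0 < (⟪X x, x⟫_ℂ).re ∧ |(⟪X x, x⟫_ℂ).im| ≤ (⟪X x, x⟫_ℂ).re * Real.tan α)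
    (u : E) :
    0 ≤ (⟪X u, u⟫_ℂ).re ∧ |(⟪X u, u⟫_ℂ).im| ≤ (⟪X u, u⟫_ℂ).re * Real.tan α ∧
      ((⟪X u, u⟫_ℂ).re = 0 → u = 0) := by
  rcases eq_or_ne u 0 with h | h
  · simp [h]
  · have hn : (0:ℝ) < ‖u‖ := norm_pos_iff.mpr h
    set x : E := ((‖u‖ : ℂ))⁻¹ • u with hx
    have hx1 : ‖x‖ = 1 := by
      rw [hx, norm_smul]
      simp [abs_of_pos (inv_pos.mpr hn), inv_mul_cancel₀ hn.ne']
    obtain ⟨h1, h2⟩ := hX x hx1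
    have key : ⟪X u, u⟫_ℂ = (↑(‖u‖^2) : ℂ) * ⟪X x, x⟫_ℂ := by
      rw [hx, X.map_smul, inner_smul_left, inner_smul_right]
      rw [map_inv₀, Complex.conj_ofReal]
      push_cast
      have : (‖u‖ : ℂ) ≠ 0 := by exact_mod_cast hn.ne'
      field_simp
    have hre : (⟪X u, u⟫_ℂ).re = ‖u‖^2 * (⟪X x, x⟫_ℂ).re := by
      rw [key]; simp [Complex.mul_re, ← Complex.ofReal_pow]
    have him : (⟪X u, u⟫_ℂ).im = ‖u‖^2 * (⟪X x, x⟫_ℂ).im := by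
      rw [key]; simp [Complex.mul_im, ← Complex.ofReal_pow]
    have hsq : (0:ℝ) < ‖u‖^2 := by positivity
    refine ⟨by rw [hre]; positivity, ?_, ?_⟩
    · rw [hre, him, abs_mul, abs_of_pos hsq, mul_assoc]
      exact mul_le_mul_of_nonneg_left h2 hsq.le
    · intro h0
      rw [hre] at h0
      exact absurd ((mul_eq_zero.mp h0).resolve_left hsq.ne') h1.ne'

lemma v_eq_zero_of_ortho (A : Matrix (Fin m) (Fin m) ℂ) (v : Fin m → E)
    (hortho : ∀ w : Fin m → ℂ, A *ᵥ w = 0 → ∑ j, (starRingEnd ℂ (w j)) • v j = 0)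
    (hAv : ∀ j, ∑ l, A j l • v l = 0) : ∀ p, v p = 0 := by
  have main : ∀ y : E, ∑ j, Complex.normSq ⟪y, v j⟫_ℂ = 0 := by
    intro y
    have hker : A *ᵥ (fun j => ⟪y, v j⟫_ℂ) = 0 := by
      funext j
      have : (A *ᵥ (fun j => ⟪y, v j⟫_ℂ)) j = ⟪y, ∑ l, A j l • v l⟫_ℂ := by
        rw [Matrix.mulVec, dotProduct, inner_sum]
        exact Finset.sum_congr rfl fun l _ => (inner_smul_right _ _ _).symm
      rw [this, hAv]
      simp
    have h0 := hortho _ hker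
    have : ⟪y, ∑ j, (starRingEnd ℂ ⟪y, v j⟫_ℂ) • v j⟫_ℂ = 0 := by rw [h0]; simp
    rw [inner_sum] at this
    have heq : ∀ j : Fin m, ⟪y, (starRingEnd ℂ ⟪y, v j⟫_ℂ) • v j⟫_ℂ
        = (Complex.normSq ⟪y, v j⟫_ℂ : ℂ) := by
      intro j
      rw [inner_smul_right]
      rw [← Complex.normSq_conj ⟪y, v j⟫_ℂ, ← Complex.mul_conj]
      simp
    rw [Finset.sum_congr rfl (fun j _ => heq j)] at this
    have h2 : ((∑ j, Complex.normSq ⟪y, v j⟫_ℂ : ℝ) : ℂ) = 0 := by push_cast; exact this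
    exact_mod_cast h2
  intro p
  have := main (v p)
  have hterm : Complex.normSq ⟪v p, v p⟫_ℂ = 0 := by
    have hnonneg : ∀ j ∈ Finset.univ, (0:ℝ) ≤ Complex.normSq ⟪v p, v j⟫_ℂ :=
      fun j _ => Complex.normSq_nonneg _
    exact (Finset.sum_eq_zero_iff_of_nonneg hnonneg).mp this p (Finset.mem_univ p)
  rw [← inner_self_eq_zero (𝕜 := ℂ) (x := v p)]
  exact Complex.normSq_eq_zero.mp hterm

end Aux

/-- Let `L_B(X) = Σᵢ Bᵢ ⊗ Xᵢ` with each `Bᵢ` positive semi-definite. If each `Xᵢ` has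
numerical range in the sector `S_α`, then the numerical range of `L_B(X)` restricted to
the subspace `N⊥(Σ Bᵢ) ⊗ E` (vectors orthogonal to `ker(Σ Bᵢ) ⊗ E`) is contained in
`S_α`. -/
theorem pencil_sectorial_on_kernel_complement
    {E : Type*} [NormedAddCommGroup E] [InnerProductSpace ℂ E] [CompleteSpace E]
    (m k : ℕ) (B : Fin k → Matrix (Fin m) (Fin m) ℂ) (hB : ∀ i, (B i).PosSemidef)
    (X : Fin k → (E →L[ℂ] E))
    (α : ℝ) (hα0 : 0 ≤ α) (hα : α < Real.pi / 2)
    (hX : ∀ i, ∀ x : E, ‖x‖ = 1 →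
      0 < (⟪X i x, x⟫_ℂ).re ∧ |(⟪X i x, x⟫_ℂ).im| ≤ (⟪X i x, x⟫_ℂ).re * Real.tan α) :
    ∀ v : PiLp 2 (fun _ : Fin m => E),
      (∀ w : Fin m → ℂ, (∑ i, B i) *ᵥ w = 0 → ∑ j, (starRingEnd ℂ (w j)) • v j = 0) →
      ‖v‖ = 1 →
      0 < (⟪(∑ i, kronCLM (B i) (X i)) v, v⟫_ℂ).re ∧
      |(⟪(∑ i, kronCLM (B i) (X i)) v, v⟫_ℂ).im| ≤
        (⟪(∑ i, kronCLM (B i) (X i)) v, v⟫_ℂ).re * Real.tan α := by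
  intro v hortho hv1
  have htan : 0 ≤ Real.tan α :=
    Real.tan_nonneg_of_nonneg_of_le_pi_div_two hα0 hα.le
  -- the vectors u i p
  set u : Fin k → Fin m → E := fun i p => ∑ l, (hB i).sqrt p l • v l with hu
  -- decompose the inner product
  have hdecomp : ⟪(∑ i, kronCLM (B i) (X i)) v, v⟫_ℂ =
      ∑ i, ∑ p, ⟪X i (u i p), u i p⟫_ℂ := by
    rw [ContinuousLinearMap.sum_apply, sum_inner]
    refine Finset.sum_congr rfl fun i _ => ?_
    rw [inner_kronCLM, double_sum_sqrt (B i) (hB i)]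
  -- per-term sector bounds
  have hterm := fun (i : Fin k) (p : Fin m) => sector_point (X i) α (hX i) (u i p)
  have hre : (⟪(∑ i, kronCLM (B i) (X i)) v, v⟫_ℂ).re =
      ∑ i, ∑ p, (⟪X i (u i p), u i p⟫_ℂ).re := by
    rw [hdecomp, Complex.re_sum]
    exact Finset.sum_congr rfl fun i _ => Complex.re_sum _ _
  have him : (⟪(∑ i, kronCLM (B i) (X i)) v, v⟫_ℂ).im =
      ∑ i, ∑ p, (⟪X i (u i p), u i p⟫_ℂ).im := by
    rw [hdecomp, Complex.im_sum]
    exact Finset.sum_congr rfl fun i _ => Complex.im_sum _ _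
  have hre_nonneg : 0 ≤ (⟪(∑ i, kronCLM (B i) (X i)) v, v⟫_ℂ).re := by
    rw [hre]
    exact Finset.sum_nonneg fun i _ => Finset.sum_nonneg fun p _ => (hterm i p).1
  constructor
  · -- strict positivity
    rcases hre_nonneg.lt_or_eq with h | h
    · exact h
    · exfalso
      -- all real parts vanish
      have hzero : ∀ i, ∀ p, (⟪X i (u i p), u i p⟫_ℂ).re = 0 := by
        have h' : ∑ i, ∑ p, (⟪X i (u i p), u i p⟫_ℂ).re = 0 := by rw [← hre, ← h]
        intro i p
        have hi := (Finset.sum_eq_zero_iff_of_nonneg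
          (fun i _ => Finset.sum_nonneg fun p _ => (hterm i p).1)).mp h' i (Finset.mem_univ i)
        exact (Finset.sum_eq_zero_iff_of_nonneg
          (fun p _ => (hterm i p).1)).mp hi p (Finset.mem_univ p)
      have huzero : ∀ i p, u i p = 0 := fun i p => (hterm i p).2.2 (hzero i p)
      have hBiv : ∀ i, ∀ j, ∑ l, (B i) j l • v l = 0 := fun i =>
        sqrt_sum_eq_zero_imp (B i) (hB i) v (fun p => huzero i p)
      have hAv : ∀ j, ∑ l, (∑ i, B i) j l • v l = 0 := by
        intro j
        have : ∀ l, (∑ i, B i) j l = ∑ i, (B i) j l := by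
          intro l
          simp [Matrix.sum_apply]
        calc ∑ l, (∑ i, B i) j l • v l = ∑ l, ∑ i, (B i) j l • v l := by
              refine Finset.sum_congr rfl fun l _ => ?_
              rw [this, Finset.sum_smul]
          _ = ∑ i, ∑ l, (B i) j l • v l := by rw [Finset.sum_comm]
          _ = 0 := Finset.sum_eq_zero fun i _ => hBiv i j
      have hv0 : ∀ p, v p = 0 := v_eq_zero_of_ortho _ v hortho hAv
      have : v = 0 := PiLp.ext hv0
      rw [this] at hv1
      simp at hv1
  · -- sector bound on imaginary part
    rw [him, hre, Finset.sum_mul]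
    calc |∑ i, ∑ p, (⟪X i (u i p), u i p⟫_ℂ).im|
        ≤ ∑ i, |∑ p, (⟪X i (u i p), u i p⟫_ℂ).im| := Finset.abs_sum_le_sum_abs _ _
      _ ≤ ∑ i, (∑ p, (⟪X i (u i p), u i p⟫_ℂ).re) * Real.tan α := by
          refine Finset.sum_le_sum fun i _ => ?_
          rw [Finset.sum_mul]
          calc |∑ p, (⟪X i (u i p), u i p⟫_ℂ).im|
              ≤ ∑ p, |(⟪X i (u i p), u i p⟫_ℂ).im| := Finset.abs_sum_le_sum_abs _ _
            _ ≤ ∑ p, (⟪X i (u i p), u i p⟫_ℂ).re * Real.tan α :=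
                Finset.sum_le_sum fun p _ => (hterm i p).2.1
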